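/- Let μ, ν be two finite Borel measures on ℝ^K with compact support. If for every v ∈ ℝ^K the pushforward measures of μ and ν under the linear map x ↦ ⟨v, x⟩ are equal, then μ = ν (Cramér–Wold theorem for compactly supported measures). -/

import Mathlib

open MeasureTheory Real
variable {K : ℕ}
noncomputable abbrev E (K : ℕ) := EuclideanSpace ℝ (Fin K)

noncomputable def cosM (v : E K) : C(E K, ℝ) :=
  ⟨fun x => Real.cos (inner ℝ v x), Real.continuous_cos.comp (continuous_const.inner continuous_id)⟩
noncomputable def sinM (v : E K) : C(E K, ℝ) :=
  ⟨fun x => Real.sin (inner ℝ v x), Real.continuous_sin.comp (continuous_const.inner continuous_id)⟩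

def trigSet (K : ℕ) : Set C(E K, ℝ) := {f | ∃ v, f = cosM v ∨ f = sinM v}

lemma trig_mul_mem {f g : C(E K, ℝ)} (hf : f ∈ trigSet K) (hg : g ∈ trigSet K) :
    f * g ∈ Submodule.span ℝ (trigSet K) := by
  obtain ⟨v, hv⟩ := hf
  obtain ⟨w, hw⟩ := hg
  have mem : ∀ u : E K, cosM u ∈ Submodule.span ℝ (trigSet K) := fun u =>
    Submodule.subset_span ⟨u, Or.inl rfl⟩
  have mem' : ∀ u : E K, sinM u ∈ Submodule.span ℝ (trigSet K) := fun u =>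
    Submodule.subset_span ⟨u, Or.inr rfl⟩
  rcases hv with rfl | rfl <;> rcases hw with rfl | rfl
  · have : cosM v * cosM w = (1/2 : ℝ) • cosM (v - w) + (1/2 : ℝ) • cosM (v + w) := by
      ext x
      simp [cosM, inner_sub_left, inner_add_left, Real.cos_add, Real.cos_sub]
      ring
    rw [this]
    exact Submodule.add_mem _ (Submodule.smul_mem _ _ (mem _)) (Submodule.smul_mem _ _ (mem _))
  · have : cosM v * sinM w = (1/2 : ℝ) • sinM (v + w) - (1/2 : ℝ) • sinM (v - w) := by
      ext x
      simp [cosM, sinM, inner_sub_left, inner_add_left, Real.sin_add, Real.sin_sub]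
      ring
    rw [this]
    exact Submodule.sub_mem _ (Submodule.smul_mem _ _ (mem' _)) (Submodule.smul_mem _ _ (mem' _))
  · have : sinM v * cosM w = (1/2 : ℝ) • sinM (v + w) + (1/2 : ℝ) • sinM (v - w) := by
      ext x
      simp [cosM, sinM, inner_sub_left, inner_add_left, Real.sin_add, Real.sin_sub]
      ring
    rw [this]
    exact Submodule.add_mem _ (Submodule.smul_mem _ _ (mem' _)) (Submodule.smul_mem _ _ (mem' _))
  · have : sinM v * sinM w = (1/2 : ℝ) • cosM (v - w) - (1/2 : ℝ) • cosM (v + w) := by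
      ext x
      simp [cosM, sinM, inner_sub_left, inner_add_left, Real.cos_add, Real.cos_sub]
      ring
    rw [this]
    exact Submodule.sub_mem _ (Submodule.smul_mem _ _ (mem _)) (Submodule.smul_mem _ _ (mem _))

lemma one_mem_trig : (1 : C(E K, ℝ)) ∈ Submodule.span ℝ (trigSet K) := by
  have : (1 : C(E K, ℝ)) = cosM 0 := by
    ext x; simp [cosM]
  rw [this]
  exact Submodule.subset_span ⟨0, Or.inl rfl⟩

noncomputable def trigAlg (K : ℕ) : Subalgebra ℝ C(E K, ℝ) := by
  refine Submodule.toSubalgebra (Submodule.span ℝ (trigSet K)) one_mem_trig ?_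
  intro x y hx hy
  induction hx using Submodule.span_induction generalizing y with
  | mem f hf =>
    induction hy using Submodule.span_induction with
    | mem g hg => exact trig_mul_mem hf hg
    | zero => simpa using Submodule.zero_mem _
    | add a b _ _ ha hb => rw [mul_add]; exact Submodule.add_mem _ ha hb
    | smul c a _ ha => rw [mul_smul_comm]; exact Submodule.smul_mem _ _ ha
  | zero => simpa using Submodule.zero_mem _
  | add a b _ _ ha hb => rw [add_mul]; exact Submodule.add_mem _ (ha _ hy) (hb _ hy)
  | smul c a _ ha => rw [smul_mul_assoc]; exact Submodule.smul_mem _ _ (ha _ hy)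

lemma trig_integral_eq (μ ν : Measure (E K)) [IsFiniteMeasure μ] [IsFiniteMeasure ν]
    (h : ∀ v : E K,
      Measure.map (fun x => (inner ℝ v x : ℝ)) μ = Measure.map (fun x => (inner ℝ v x : ℝ)) ν)
    {f : C(E K, ℝ)} (hf : f ∈ Submodule.span ℝ (trigSet K)) :
    Integrable f μ ∧ Integrable f ν ∧ ∫ x, f x ∂μ = ∫ x, f x ∂ν := by
  induction hf using Submodule.span_induction with
  | mem g hg =>
    obtain ⟨v, hv⟩ := hg
    have hinner : AEMeasurable (fun x : E K => (inner ℝ v x : ℝ)) μ ∧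
        AEMeasurable (fun x : E K => (inner ℝ v x : ℝ)) ν :=
      ⟨(continuous_const.inner continuous_id).measurable.aemeasurable,
       (continuous_const.inner continuous_id).measurable.aemeasurable⟩
    have key : ∀ (φ : ℝ → ℝ), Continuous φ → (∀ t, |φ t| ≤ 1) →
        Integrable (fun x => φ (inner ℝ v x)) μ ∧ Integrable (fun x => φ (inner ℝ v x)) ν ∧
        ∫ x, φ (inner ℝ v x) ∂μ = ∫ x, φ (inner ℝ v x) ∂ν := by
      intro φ hφ hb
      have hcont : Continuous fun x : E K => φ (inner ℝ v x) :=
        hφ.comp (continuous_const.inner continuous_id)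
      have hint : ∀ (m : Measure (E K)) [IsFiniteMeasure m],
          Integrable (fun x => φ (inner ℝ v x)) m := by
        intro m _
        refine Integrable.mono' (integrable_const 1) hcont.aestronglyMeasurable ?_
        filter_upwards with x using by simpa using hb _
      refine ⟨hint μ, hint ν, ?_⟩
      have h1 : ∫ x, φ (inner ℝ v x) ∂μ = ∫ t, φ t ∂(Measure.map (fun x => (inner ℝ v x : ℝ)) μ) :=
        (integral_map hinner.1 hφ.aestronglyMeasurable).symm
      have h2 : ∫ x, φ (inner ℝ v x) ∂ν = ∫ t, φ t ∂(Measure.map (fun x => (inner ℝ v x : ℝ)) ν) :=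
        (integral_map hinner.2 hφ.aestronglyMeasurable).symm
      rw [h1, h2, h v]
    rcases hv with rfl | rfl
    · simpa [cosM] using key Real.cos Real.continuous_cos (fun t => Real.abs_cos_le_one t)
    · simpa [sinM] using key Real.sin Real.continuous_sin (fun t => Real.abs_sin_le_one t)
  | zero =>
    refine ⟨?_, ?_, by simp⟩ <;>
      simpa only [ContinuousMap.coe_zero] using integrable_zero _ _ _
  | add a b _ _ ha hb =>
    refine ⟨?_, ?_, ?_⟩
    · rw [ContinuousMap.coe_add]; exact ha.1.add hb.1
    · rw [ContinuousMap.coe_add]; exact ha.2.1.add hb.2.1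
    · simp only [ContinuousMap.add_apply]
      rw [integral_add ha.1 hb.1, integral_add ha.2.1 hb.2.1, ha.2.2, hb.2.2]
  | smul c a _ ha =>
    refine ⟨?_, ?_, ?_⟩
    · rw [ContinuousMap.coe_smul]; exact ha.1.smul c
    · rw [ContinuousMap.coe_smul]; exact ha.2.1.smul c
    · simp only [ContinuousMap.smul_apply, smul_eq_mul]
      rw [integral_const_mul, integral_const_mul, ha.2.2]

lemma trig_separates (S : Set (E K)) :
    ((trigAlg K).map (ContinuousMap.compRightAlgHom ℝ ℝ
      (⟨Subtype.val, continuous_subtype_val⟩ : C(S, E K)))).SeparatesPoints := by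
  intro x y hxy
  set v : E K := (x : E K) - (y : E K) with hv
  have hvne : v ≠ 0 := sub_ne_zero.mpr (fun hh => hxy (Subtype.ext hh))
  set a : ℝ := inner ℝ v (x : E K) with ha
  set b : ℝ := inner ℝ v (y : E K) with hb
  have hab : a ≠ b := by
    intro hEq
    have : (inner ℝ v v : ℝ) = 0 := by
      rw [hv]
      rw [inner_sub_right]
      rw [← ha, ← hb] at *
      linarith [hEq]
    exact hvne (inner_self_eq_zero.mp this)
  set t : ℝ := (π / 2) / (1 + |a| + |b|) with ht
  have hden : (0:ℝ) < 1 + |a| + |b| := by positivity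
  have htpos : 0 < t := div_pos Real.pi_div_two_pos hden
  have hbound : ∀ c : ℝ, |c| ≤ |a| + |b| → t * c ∈ Set.Icc (-(π/2)) (π/2) := by
    intro c hc
    have h1 : |t * c| ≤ π / 2 := by
      rw [abs_mul, abs_of_pos htpos, ht]
      rw [div_mul_eq_mul_div, div_le_iff₀ hden]
      have : |c| ≤ 1 + |a| + |b| := by linarith
      nlinarith [Real.pi_div_two_pos.le]
    exact Set.mem_Icc.mpr (abs_le.mp h1)
  have hsin : Real.sin (t * a) ≠ Real.sin (t * b) := by
    intro hEq
    have := Real.injOn_sin (hbound a (by simp [le_add_iff_nonneg_right, abs_nonneg])) 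
      (hbound b (by simp [le_add_iff_nonneg_left, abs_nonneg])) hEq
    exact hab (mul_left_cancel₀ (ne_of_gt htpos) this)
  refine ⟨_, ⟨(ContinuousMap.compRightAlgHom ℝ ℝ _) (sinM (t • v)),
    Subalgebra.mem_map.mpr ⟨sinM (t • v), Submodule.subset_span ⟨t • v, Or.inr rfl⟩, rfl⟩, rfl⟩, ?_⟩
  show Real.sin (inner ℝ (t • v) (x : E K)) ≠ Real.sin (inner ℝ (t • v) (y : E K))
  rw [real_inner_smul_left, real_inner_smul_left, ← ha, ← hb]
  exact hsin

theorem stmt_6 {K : ℕ} (μ ν : Measure (EuclideanSpace ℝ (Fin K)))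
    [IsFiniteMeasure μ] [IsFiniteMeasure ν]
    (Kμ Kν : Set (EuclideanSpace ℝ (Fin K)))
    (hKμ : IsCompact Kμ) (hKν : IsCompact Kν)
    (hμsupp : μ Kμᶜ = 0) (hνsupp : ν Kνᶜ = 0)
    (h : ∀ v : EuclideanSpace ℝ (Fin K),
      Measure.map (fun x => (inner ℝ v x : ℝ)) μ =
      Measure.map (fun x => (inner ℝ v x : ℝ)) ν) :
    μ = ν := by
  set S : Set (E K) := Kμ ∪ Kν with hSdef
  have hS : IsCompact S := hKμ.union hKν
  haveI : CompactSpace S := isCompact_iff_compactSpace.mp hS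
  have hμS : μ Sᶜ = 0 :=
    measure_mono_null (by rw [hSdef, Set.compl_union]; exact Set.inter_subset_left) hμsupp
  have hνS : ν Sᶜ = 0 :=
    measure_mono_null (by rw [hSdef, Set.compl_union]; exact Set.inter_subset_right) hνsupp
  have hrμ : μ.restrict S = μ :=
    Measure.restrict_eq_self_of_ae_mem (by rw [MeasureTheory.ae_iff]; simpa [Set.compl_def] using hμS)
  have hrν : ν.restrict S = ν :=
    Measure.restrict_eq_self_of_ae_mem (by rw [MeasureTheory.ae_iff]; simpa [Set.compl_def] using hνS)
  refine ext_of_forall_lintegral_eq_of_IsFiniteMeasure ?_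
  intro f
  set F : E K → ℝ := fun x => (f x : ℝ) with hF
  have hFc : Continuous F := NNReal.continuous_coe.comp f.continuous
  obtain ⟨D, hD⟩ := f.map_bounded'
  have hb : ∀ x, ‖F x‖ ≤ D + F 0 := by
    intro x
    rw [Real.norm_eq_abs]
    have habs : |F x| = F x := abs_of_nonneg (f x).2
    rw [habs]
    have h1 : dist (f x) (f 0) ≤ D := hD x 0
    rw [NNReal.dist_eq] at h1
    have h2 := le_abs_self ((F x) - (F 0))
    have h3 : |(F x : ℝ) - (F 0 : ℝ)| ≤ D := h1
    linarith
  have hFint : ∀ (m : Measure (E K)) [IsFiniteMeasure m], Integrable F m := by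
    intro m _
    refine Integrable.mono' (integrable_const (D + F 0)) hFc.aestronglyMeasurable ?_
    filter_upwards with x using hb x
  suffices hFeq : ∫ x, F x ∂μ = ∫ x, F x ∂ν by
    rw [lintegral_coe_eq_integral f (hFint μ), lintegral_coe_eq_integral f (hFint ν)]
    exact congrArg ENNReal.ofReal hFeq
  set C : ℝ := (μ S).toReal + (ν S).toReal with hCdef
  have hC : 0 ≤ C := by positivity
  have key : ∀ ε : ℝ, 0 < ε → |∫ x, F x ∂μ - ∫ x, F x ∂ν| ≤ ε * C := by
    intro ε hε
    obtain ⟨g, hg⟩ := ContinuousMap.exists_mem_subalgebra_near_continuous_of_separatesPoints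
      ((trigAlg K).map (ContinuousMap.compRightAlgHom ℝ ℝ
        (⟨Subtype.val, continuous_subtype_val⟩ : C(S, E K))))
      (trig_separates S) (fun x : S => F x) (hFc.comp continuous_subtype_val) ε hε
    obtain ⟨G0, hG0mem, hG0⟩ := Subalgebra.mem_map.mp g.2
    have hnear : ∀ x ∈ S, ‖F x - G0 x‖ ≤ ε := by
      intro x hx
      have h1 := hg ⟨x, hx⟩
      have h2 : (g : S → ℝ) ⟨x, hx⟩ = G0 x := by
        rw [← hG0]; rfl
      rw [h2] at h1
      rw [norm_sub_rev]
      exact le_of_lt h1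
    have hG0mem' : G0 ∈ Submodule.span ℝ (trigSet K) := hG0mem
    obtain ⟨hIμ, hIν, hIeq⟩ := trig_integral_eq μ ν h hG0mem'
    have bound : ∀ (m : Measure (E K)) [IsFiniteMeasure m], Integrable (⇑G0) m →
        m.restrict S = m → |∫ x, F x ∂m - ∫ x, G0 x ∂m| ≤ ε * (m S).toReal := by
      intro m _ hI hr
      have h1 : ∫ x, F x ∂m - ∫ x, G0 x ∂m = ∫ x, (F x - G0 x) ∂m :=
        (integral_sub (hFint m) hI).symm
      have h2 : ∫ x, (F x - G0 x) ∂m = ∫ x in S, (F x - G0 x) ∂m := by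
        conv_lhs => rw [← hr]
      rw [h1, h2, ← Real.norm_eq_abs]
      exact norm_setIntegral_le_of_norm_le_const (measure_lt_top m S) hnear
    have b1 := bound μ hIμ hrμ
    have b2 := bound ν hIν hrν
    calc |∫ x, F x ∂μ - ∫ x, F x ∂ν|
        = |(∫ x, F x ∂μ - ∫ x, G0 x ∂μ) - (∫ x, F x ∂ν - ∫ x, G0 x ∂ν)| := by
          rw [hIeq]; ring_nf
      _ ≤ |∫ x, F x ∂μ - ∫ x, G0 x ∂μ| + |∫ x, F x ∂ν - ∫ x, G0 x ∂ν| := abs_sub _ _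
      _ ≤ ε * (μ S).toReal + ε * (ν S).toReal := add_le_add b1 b2
      _ = ε * C := by rw [hCdef]; ring
  by_contra hne
  have hd : 0 < |∫ x, F x ∂μ - ∫ x, F x ∂ν| := abs_pos.mpr (sub_ne_zero.mpr hne)
  set d := |∫ x, F x ∂μ - ∫ x, F x ∂ν| with hdd
  have hpos2 : (0:ℝ) < 2 * (C + 1) := by positivity
  have h1 := key (d / (2 * (C + 1))) (by positivity)
  rw [div_mul_eq_mul_div, le_div_iff₀ hpos2] at h1
  nlinarith [mul_nonneg hd.le hC]
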